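/- Let k ≥ 2 and let M be a simple matroid of rank k+1. If (R,B) is a partition of E(M) such that r(B) ≥ 2, every hyperplane of M meets R, and for every line L of M|B there is a rank-(k−1) flat F skew to L with F ∩ R = ∅, then |R| ≥ 3. -/

import Mathlib

open Set
open scoped Classical

namespace MatroidPaper

variable {α : Type*}

/-- The rank of a set in a matroid: the supremum of cardinalities of independent subsets. -/
noncomputable def rkS (M : Matroid α) (X : Set α) : ℕ :=
  sSup {n | ∃ I, M.Indep I ∧ I ⊆ X ∧ I.ncard = n}

/-- The rank of a matroid. -/
noncomputable def rk (M : Matroid α) : ℕ := rkS M M.E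

/-- A hyperplane: a flat of rank `rk M - 1`. -/
def Hyp (M : Matroid α) (H : Set α) : Prop := M.IsFlat H ∧ rkS M H = rk M - 1

/-- Two sets are skew if the rank of their union is the sum of their ranks. -/
def SkewSets (M : Matroid α) (X Y : Set α) : Prop :=
  rkS M (X ∪ Y) = rkS M X + rkS M Y

/-- A simple matroid: every subset of the ground set with at most two elements is independent. -/
def SimpleM (M : Matroid α) : Prop := ∀ X ⊆ M.E, X.ncard ≤ 2 → M.Indep X

/-- A real-representable matroid. -/
def RealRep (M : Matroid α) : Prop :=
  ∃ (n : ℕ) (φ : α → (Fin n → ℝ)), ∀ I, I ⊆ M.E →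
    (M.Indep I ↔ LinearIndependent ℝ (fun x : I => φ x))

/-- A matroid is `k`-degenerate if it has rank at most one or its ground set is covered by
flats of rank at least two with `∑ (r(Fᵢ) - 1) ≤ k - 1`. -/
def Degen (M : Matroid α) (k : ℕ) : Prop :=
  rk M ≤ 1 ∨ ∃ (t : ℕ) (F : Fin t → Set α),
    (∀ i, M.IsFlat (F i) ∧ 2 ≤ rkS M (F i)) ∧
    M.E ⊆ ⋃ i, F i ∧ ∑ i, (rkS M (F i) - 1) ≤ k - 1

/-- A set `X` is `k`-degenerate in `M` if the restriction `M|X` is a `k`-degenerate matroid. -/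
def DegenSet (M : Matroid α) (X : Set α) (k : ℕ) : Prop := Degen (M.restrict X) k

/-- `N` is the (one-fold) principal truncation of `F` in `M`. -/
noncomputable def IsPT (M : Matroid α) (F : Set α) (N : Matroid α) : Prop :=
  N.E = M.E ∧ ∀ X ⊆ M.E,
    rkS N X = if F ⊆ M.closure X then rkS M X - 1 else rkS M X

/-- `N` is the complete principal truncation `M ÷ F` of `F` in `M`. -/
def IsCPT (M : Matroid α) (F : Set α) (N : Matroid α) : Prop :=
  N.E = M.E ∧ ∀ X ⊆ M.E,
    rkS N X = min (rkS M X + (rkS M F - 1)) (rkS M (X ∪ F)) - (rkS M F - 1)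

section Aux

variable {M : Matroid α} {X Y I J C F : Set α} {e x y a b g : α}

lemma closure_flat' (M : Matroid α) (X : Set α) : M.IsFlat (M.closure X) := by
  rw [Matroid.closure_def]
  have hne : Nonempty {F : Set α // M.IsFlat F ∧ X ∩ M.E ⊆ F} :=
    ⟨⟨M.E, M.ground_isFlat, inter_subset_right⟩⟩
  have h := Matroid.IsFlat.iInter (M := M)
    (Fs := fun F : {F : Set α // M.IsFlat F ∧ X ∩ M.E ⊆ F} => F.1) (fun F => F.2.1)
  rw [sInter_eq_iInter]
  exact h

lemma rkS_bddAbove (M : Matroid α) [M.Finite] (X : Set α) :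
    BddAbove {n | ∃ I, M.Indep I ∧ I ⊆ X ∧ I.ncard = n} := by
  refine ⟨M.E.ncard, ?_⟩
  rintro n ⟨I, hI, -, rfl⟩
  exact Set.ncard_le_ncard hI.subset_ground M.ground_finite

lemma indep_ncard_le_rkS [M.Finite] (hJ : M.Indep J) (hJX : J ⊆ X) : J.ncard ≤ rkS M X :=
  le_csSup (rkS_bddAbove M X) ⟨J, hJ, hJX, rfl⟩

lemma rkS_le [M.Finite] {n : ℕ} (h : ∀ I, M.Indep I → I ⊆ X → I.ncard ≤ n) : rkS M X ≤ n := by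
  refine csSup_le ⟨0, ∅, M.empty_indep, empty_subset X, by simp⟩ ?_
  rintro m ⟨I, hI, hIX, rfl⟩
  exact h I hI hIX

lemma rkS_eq_of_basis' [M.Finite] (hI : M.IsBasis' I X) : rkS M X = I.ncard := by
  refine le_antisymm (rkS_le fun J hJ hJX => ?_) (indep_ncard_le_rkS hI.indep hI.subset)
  by_contra hlt
  push_neg at hlt
  have hIf : I.Finite := M.set_finite I hI.indep.subset_ground
  have hJf : J.Finite := M.set_finite J hJ.subset_ground
  have hencard : I.encard < J.encard := by
    rw [← hIf.cast_ncard_eq, ← hJf.cast_ncard_eq]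
    exact_mod_cast hlt
  obtain ⟨z, hz, hzi⟩ := hI.indep.augment hJ hencard
  have hsub := hI.2 ⟨hzi, insert_subset (hJX hz.1) hI.subset⟩ (subset_insert _ _)
  exact hz.2 (hsub (mem_insert _ _))

lemma rkS_indep [M.Finite] (hI : M.Indep I) : rkS M I = I.ncard :=
  rkS_eq_of_basis' ⟨⟨hI, Subset.rfl⟩, fun _ hJ _ => hJ.2⟩

lemma rkS_mono [M.Finite] (h : X ⊆ Y) : rkS M X ≤ rkS M Y :=
  rkS_le fun _ hI hIX => indep_ncard_le_rkS hI (hIX.trans h)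

lemma rkS_closure_eq (M : Matroid α) [M.Finite] (X : Set α) :
    rkS M (M.closure X) = rkS M X := by
  obtain ⟨I, hI⟩ := M.exists_isBasis' X
  rw [rkS_eq_of_basis' hI, rkS_eq_of_basis' hI.isBasis_closure_right.isBasis']

lemma rkS_le_of_subset_closure [M.Finite] (h : X ⊆ M.closure Y) : rkS M X ≤ rkS M Y :=
  (rkS_mono h).trans (rkS_closure_eq M Y).le

lemma rkS_union_le (M : Matroid α) [M.Finite] (X Y : Set α) :
    rkS M (X ∪ Y) ≤ rkS M X + rkS M Y := by
  obtain ⟨K, hK⟩ := M.exists_isBasis' (X ∪ Y)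
  rw [rkS_eq_of_basis' hK]
  have h1 : (K ∩ X).ncard ≤ rkS M X :=
    indep_ncard_le_rkS (hK.indep.subset inter_subset_left) inter_subset_right
  have h2 : (K \ X).ncard ≤ rkS M Y :=
    indep_ncard_le_rkS (hK.indep.subset diff_subset)
      (fun z hz => (hK.subset hz.1).resolve_left hz.2)
  calc K.ncard = ((K ∩ X) ∪ (K \ X)).ncard := by rw [Set.inter_union_diff]
    _ ≤ (K ∩ X).ncard + (K \ X).ncard := Set.ncard_union_le _ _
    _ ≤ rkS M X + rkS M Y := add_le_add h1 h2

lemma rkS_insert_eq [M.Finite] (he : e ∈ M.E) (hX : X ⊆ M.E) (hecl : e ∉ M.closure X) :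
    rkS M (insert e X) = rkS M X + 1 := by
  obtain ⟨I, hI⟩ := M.exists_isBasis X hX
  have hclI : M.closure I = M.closure X := hI.closure_eq_closure
  have heI : e ∉ I := fun h => hecl (M.subset_closure X hX (hI.subset h))
  have hind : M.Indep (insert e I) := by
    rw [hI.indep.insert_indep_iff_of_notMem heI]
    exact ⟨he, by rwa [hclI]⟩
  have hbas : M.IsBasis (insert e I) (insert e X) := by
    refine hind.isBasis_of_subset_of_subset_closure (insert_subset_insert hI.subset) ?_
    refine insert_subset (M.subset_closure _ hind.subset_ground (mem_insert _ _)) ?_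
    calc X ⊆ M.closure X := M.subset_closure X hX
      _ = M.closure I := hclI.symm
      _ ⊆ M.closure (insert e I) := M.closure_subset_closure (subset_insert _ _)
  rw [rkS_eq_of_basis' hbas.isBasis', rkS_eq_of_basis' hI.isBasis',
    Set.ncard_insert_of_notMem heI (M.set_finite I hI.indep.subset_ground)]

lemma rkS_restrict (M : Matroid α) {B X : Set α} (hXB : X ⊆ B) :
    rkS (M.restrict B) X = rkS M X := by
  unfold rkS
  congr 1
  ext n
  constructor
  · rintro ⟨I, hI, hIX, rfl⟩
    rw [Matroid.restrict_indep_iff] at hI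
    exact ⟨I, hI.1, hIX, rfl⟩
  · rintro ⟨I, hI, hIX, rfl⟩
    exact ⟨I, Matroid.restrict_indep_iff.mpr ⟨hI, hIX.trans hXB⟩, hIX, rfl⟩

/-- A circuit: a minimal dependent set. -/
def Ckt (M : Matroid α) (C : Set α) : Prop :=
  C ⊆ M.E ∧ ¬ M.Indep C ∧ ∀ e ∈ C, M.Indep (C \ {e})

lemma Ckt.mem_closure_diff (hC : Ckt M C) (he : e ∈ C) : e ∈ M.closure (C \ {e}) := by
  by_contra h
  have hind : M.Indep (insert e (C \ {e})) := by
    rw [(hC.2.2 e he).insert_indep_iff_of_notMem (fun h' => h'.2 rfl)]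
    exact ⟨hC.1 he, h⟩
  rw [Set.insert_diff_singleton, Set.insert_eq_of_mem he] at hind
  exact hC.2.1 hind

lemma Ckt.not_subset_indep (hC : Ckt M C) (hI : M.Indep I) (h : C ⊆ I) : False :=
  hC.2.1 (hI.subset h)

lemma exists_ckt [M.Finite] (hX : X ⊆ M.E) (he : e ∈ M.closure X) (heX : e ∉ X) :
    ∃ C, Ckt M C ∧ e ∈ C ∧ C ⊆ insert e X := by
  obtain ⟨I, hI⟩ := M.exists_isBasis X hX
  have heI : e ∈ M.closure I := by rwa [hI.closure_eq_closure]
  have heE : e ∈ M.E := M.closure_subset_ground X he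
  have hSne : (I.ncard) ∈ {n : ℕ | ∃ J, J ⊆ I ∧ e ∈ M.closure J ∧ J.ncard = n} :=
    ⟨I, Subset.rfl, heI, rfl⟩
  obtain ⟨J, hJI, heJ, hJcard⟩ := Nat.sInf_mem ⟨_, hSne⟩
  have hJind : M.Indep J := hI.indep.subset hJI
  have hJfin : J.Finite := M.set_finite J hJind.subset_ground
  have heJ' : e ∉ J := fun h => heX (hI.subset (hJI h))
  refine ⟨insert e J, ⟨?_, ?_, ?_⟩, mem_insert _ _,
    insert_subset_insert (hJI.trans hI.subset)⟩
  · exact insert_subset heE hJind.subset_ground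
  · intro hind
    rw [hJind.insert_indep_iff_of_notMem heJ'] at hind
    exact hind.2 heJ
  · intro z hz
    rcases eq_or_ne z e with rfl | hne
    · rwa [Set.insert_diff_self_of_notMem heJ']
    · have hzJ : z ∈ J := (mem_insert_iff.1 hz).resolve_left hne
      have hJz : M.Indep (J \ {z}) := hJind.subset diff_subset
      have hecl : e ∉ M.closure (J \ {z}) := by
        intro hc
        have hlt : (J \ {z}).ncard < J.ncard := Set.ncard_diff_singleton_lt_of_mem hzJ hJfin
        have hle : sInf {n : ℕ | ∃ J, J ⊆ I ∧ e ∈ M.closure J ∧ J.ncard = n} ≤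
            (J \ {z}).ncard := Nat.sInf_le ⟨J \ {z}, diff_subset.trans hJI, hc, rfl⟩
        omega
      have hind : M.Indep (insert e (J \ {z})) := by
        rw [hJz.insert_indep_iff_of_notMem (fun h => heJ' h.1)]
        exact ⟨heE, hecl⟩
      rwa [Set.insert_diff_singleton_comm hne.symm] at hind

lemma exists_ckt_pair [M.Finite] (hF : M.IsFlat F) (haF : a ∉ F) (hxF : x ∉ F) (hax : a ≠ x)
    (hxE : x ∈ M.E) (ha : a ∈ M.closure (insert x F)) :
    ∃ C, Ckt M C ∧ a ∈ C ∧ x ∈ C := by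
  have hXE : insert x F ⊆ M.E := insert_subset hxE hF.subset_ground
  have haX : a ∉ insert x F := by
    rintro (rfl | h)
    · exact hax rfl
    · exact haF h
  obtain ⟨C, hC, haC, hCsub⟩ := exists_ckt hXE ha haX
  refine ⟨C, hC, haC, ?_⟩
  by_contra hxC
  have hsub : C \ {a} ⊆ F := by
    rintro z ⟨hzC, hza⟩
    rcases hCsub hzC with rfl | hz
    · exact absurd rfl hza
    · rcases hz with rfl | hz
      · exact absurd hzC hxC
      · exact hz
  have hacl : a ∈ M.closure F := M.closure_subset_closure hsub (hC.mem_closure_diff haC)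
  rw [hF.closure] at hacl
  exact haF hacl

lemma ckt_elim [M.Finite] {C₁ C₂ : Set α} (hC₁ : Ckt M C₁) (hC₂ : Ckt M C₂)
    (hxC₁ : x ∈ C₁) (hxC₂ : x ∈ C₂) (heC₁ : e ∈ C₁) (heC₂ : e ∉ C₂) :
    ∃ C₃, Ckt M C₃ ∧ e ∈ C₃ ∧ C₃ ⊆ (C₁ ∪ C₂) \ {x} := by
  have hex : e ≠ x := fun h => heC₂ (h ▸ hxC₂)
  set V := (C₁ ∪ C₂) \ {x, e} with hV
  have hVE : V ⊆ M.E := diff_subset.trans (union_subset hC₁.1 hC₂.1)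
  have hxV : x ∈ M.closure V := by
    refine M.closure_subset_closure (show C₂ \ {x} ⊆ V from ?_) (hC₂.mem_closure_diff hxC₂)
    rintro z ⟨hz, hzx⟩
    refine ⟨Or.inr hz, ?_⟩
    rintro (rfl | rfl)
    · exact hzx rfl
    · exact heC₂ hz
  have heV : e ∈ M.closure V := by
    have h2 : C₁ \ {e} ⊆ insert x V := by
      rintro z ⟨hz, hze⟩
      rcases eq_or_ne z x with rfl | hzx
      · exact mem_insert _ _
      · exact Or.inr ⟨Or.inl hz, by rintro (rfl | rfl) <;> [exact hzx rfl; exact hze rfl]⟩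
    have h3 := M.closure_subset_closure h2 (hC₁.mem_closure_diff heC₁)
    rwa [Matroid.closure_insert_eq_of_mem_closure hxV] at h3
  have heVmem : e ∉ V := fun h => h.2 (Or.inr rfl)
  obtain ⟨C₃, h3, he3, hsub⟩ := exists_ckt hVE heV heVmem
  refine ⟨C₃, h3, he3, hsub.trans ?_⟩
  rintro z (rfl | hz)
  · exact ⟨Or.inl heC₁, hex⟩
  · exact ⟨hz.1, fun h => hz.2 (Or.inl h)⟩

lemma ckt_trans [M.Finite] : ∀ (n : ℕ) (C₁ C₂ : Set α), (C₁ ∪ C₂).ncard ≤ n →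
    Ckt M C₁ → Ckt M C₂ → e ∈ C₁ → g ∈ C₂ → (C₁ ∩ C₂).Nonempty →
    ∃ C, Ckt M C ∧ e ∈ C ∧ g ∈ C := by
  intro n
  induction n with
  | zero =>
    intro C₁ C₂ hcard h1 h2 he _ _
    have hfin : (C₁ ∪ C₂).Finite := M.set_finite _ (union_subset h1.1 h2.1)
    have hpos := (Set.ncard_pos hfin).2 ⟨e, Or.inl he⟩
    omega
  | succ n ih =>
    intro C₁ C₂ hcard h1 h2 he hg hne
    by_cases hgC₁ : g ∈ C₁
    · exact ⟨C₁, h1, he, hgC₁⟩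
    by_cases heC₂ : e ∈ C₂
    · exact ⟨C₂, h2, heC₂, hg⟩
    obtain ⟨x, hx1, hx2⟩ := hne
    have hfin12 : (C₁ ∪ C₂).Finite := M.set_finite _ (union_subset h1.1 h2.1)
    obtain ⟨C₃, h3, he3, hsub3⟩ := ckt_elim h1 h2 hx1 hx2 he heC₂
    by_cases hg3 : g ∈ C₃
    · exact ⟨C₃, h3, he3, hg3⟩
    have h3ne : (C₃ ∩ C₂).Nonempty := by
      rw [Set.nonempty_iff_ne_empty]
      intro hemp
      refine h3.not_subset_indep (h1.2.2 x hx1) ?_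
      intro z hz
      have hz' := hsub3 hz
      refine ⟨hz'.1.resolve_right (fun hzC₂ => ?_), hz'.2⟩
      exact Set.eq_empty_iff_forall_notMem.1 hemp z ⟨hz, hzC₂⟩
    by_cases hlt : (C₃ ∪ C₂).ncard < (C₁ ∪ C₂).ncard
    · exact ih C₃ C₂ (by omega) h3 h2 he3 hg h3ne
    · have hequ : C₃ ∪ C₂ = C₁ ∪ C₂ :=
        Set.eq_of_subset_of_ncard_le
          (union_subset (hsub3.trans diff_subset) subset_union_right) (by omega) hfin12
      obtain ⟨C₄, h4, hg4, hsub4⟩ := ckt_elim h2 h1 hx2 hx1 hg hgC₁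
      by_cases he4 : e ∈ C₄
      · exact ⟨C₄, h4, he4, hg4⟩
      have hsub4' : C₄ ⊆ (C₁ ∪ C₂) \ {x} := by
        rwa [union_comm C₁ C₂]
      have h4ne : (C₄ ∩ C₁).Nonempty := by
        rw [Set.nonempty_iff_ne_empty]
        intro hemp
        refine h4.not_subset_indep (h2.2.2 x hx2) ?_
        intro z hz
        have hz' := hsub4' hz
        refine ⟨hz'.1.resolve_left (fun hzC₁ => ?_), hz'.2⟩
        exact Set.eq_empty_iff_forall_notMem.1 hemp z ⟨hz, hzC₁⟩
      by_cases hlt2 : (C₁ ∪ C₄).ncard < (C₁ ∪ C₂).ncard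
      · exact ih C₁ C₄ (by omega) h1 h4 he hg4 ⟨_, h4ne.choose_spec.2, h4ne.choose_spec.1⟩
      · have hequ2 : C₁ ∪ C₄ = C₁ ∪ C₂ :=
          Set.eq_of_subset_of_ncard_le
            (union_subset subset_union_left (hsub4'.trans diff_subset)) (by omega) hfin12
        have hsub13 : C₁ \ C₂ ⊆ C₃ := by
          rintro z ⟨hz1, hz2⟩
          have : z ∈ C₃ ∪ C₂ := hequ ▸ (Or.inl hz1 : z ∈ C₁ ∪ C₂)
          exact this.resolve_right hz2
        have h4' : (C₄ ∩ (C₁ \ C₂)).Nonempty := by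
          rw [Set.nonempty_iff_ne_empty]
          intro hemp
          refine h4.not_subset_indep (h2.2.2 x hx2) ?_
          intro z hz
          have hz' := hsub4' hz
          rcases hz'.1 with hz1 | hz2
          · by_cases hzC2 : z ∈ C₂
            · exact ⟨hzC2, hz'.2⟩
            · exact (Set.eq_empty_iff_forall_notMem.1 hemp z ⟨hz, hz1, hzC2⟩).elim
          · exact ⟨hz2, hz'.2⟩
        obtain ⟨h', hh4, hh12⟩ := h4'
        have hh3 : h' ∈ C₃ := hsub13 hh12
        have hss : C₃ ∪ C₄ ⊆ (C₁ ∪ C₂) \ {x} := union_subset hsub3 hsub4'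
        have hcard2 : (C₃ ∪ C₄).ncard < (C₁ ∪ C₂).ncard :=
          lt_of_le_of_lt (Set.ncard_le_ncard hss hfin12.diff)
            (Set.ncard_diff_singleton_lt_of_mem (Or.inl hx1) hfin12)
        exact ih C₃ C₄ (by omega) h3 h4 he3 hg4 ⟨h', hh3, hh4⟩

end Aux

/-- `b_k(2) = 0`: under (C1),(C2),(C3) at least three red elements are needed. -/
theorem stmt10 (k : ℕ) (hk : 2 ≤ k) (M : Matroid α) [M.Finite] (hs : SimpleM M)
    (hr : rk M = k + 1) (R B : Set α) (hRB : R ∪ B = M.E) (hd : Disjoint R B)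
    (hB : 2 ≤ rkS M B)
    (hhyp : ∀ H, Hyp M H → (H ∩ R).Nonempty)
    (hline : ∀ L, (M.restrict B).IsFlat L → rkS (M.restrict B) L = 2 →
      ∃ F, M.IsFlat F ∧ rkS M F = k - 1 ∧ SkewSets M F L ∧ F ∩ R = ∅) :
    3 ≤ R.ncard := by
  classical
  by_contra hcon
  push_neg at hcon
  have hBE : B ⊆ M.E := hRB ▸ subset_union_right
  have hRE : R ⊆ M.E := hRB ▸ subset_union_left
  have hrk : rkS M M.E = k + 1 := hr
  -- two independent elements of B
  obtain ⟨I, hI⟩ := M.exists_isBasis' B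
  have hIcard : 2 ≤ I.ncard := by
    have := hB
    rw [rkS_eq_of_basis' hI] at this
    exact this
  have hIfin : I.Finite := M.set_finite I hI.indep.subset_ground
  obtain ⟨x, hxI, y, hyI, hxy⟩ := (Set.one_lt_ncard hIfin).1 (by omega)
  have hxB : x ∈ B := hI.subset hxI
  have hyB : y ∈ B := hI.subset hyI
  -- the flat provided by hline, for any two distinct elements of B
  have getF : ∀ u ∈ B, ∀ v ∈ B, u ≠ v → ∃ F, M.IsFlat F ∧ F ∩ R = ∅ ∧ F ⊆ B ∧
      rkS M F = k - 1 ∧ rkS M (F ∪ {u, v}) = k + 1 ∧ u ∉ F ∧ v ∉ F := by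
    intro u hu v hv huv
    have huE := hBE hu
    have hvE := hBE hv
    have hpairE : ({u, v} : Set α) ⊆ M.E := insert_subset huE (singleton_subset_iff.2 hvE)
    have hpairB : ({u, v} : Set α) ⊆ B := insert_subset hu (singleton_subset_iff.2 hv)
    have hpair_indep : M.Indep {u, v} := hs _ hpairE (by rw [Set.ncard_pair huv])
    set L := M.closure {u, v} ∩ B with hLdef
    have hLB : L ⊆ B := inter_subset_right
    have hLcl : L ⊆ M.closure {u, v} := inter_subset_left
    have hpairL : ({u, v} : Set α) ⊆ L :=
      subset_inter (M.subset_closure _ hpairE) hpairB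
    have hrkL : rkS M L = 2 := by
      refine le_antisymm ?_ ?_
      · have h1 : rkS M L ≤ rkS M {u, v} := rkS_le_of_subset_closure hLcl
        rwa [rkS_indep hpair_indep, Set.ncard_pair huv] at h1
      · have h2 := indep_ncard_le_rkS hpair_indep hpairL
        rwa [Set.ncard_pair huv] at h2
    have hLflat : (M.restrict B).IsFlat L := by
      constructor
      · intro J X hJL hJX
        rw [Matroid.isBasis_restrict_iff'] at hJL hJX
        obtain ⟨hJL', -⟩ := hJL
        obtain ⟨hJX', hXB⟩ := hJX
        rw [inter_eq_left.2 (hLB.trans hBE)] at hJL'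
        rw [inter_eq_left.2 (hXB.trans hBE)] at hJX'
        have h1 : X ⊆ M.closure J := hJX'.subset_closure
        have h2 : M.closure J ⊆ M.closure {u, v} := by
          have h3 := M.closure_subset_closure (hJL'.subset.trans hLcl)
          rwa [Matroid.closure_closure] at h3
        exact subset_inter (h1.trans h2) hXB
      · rw [Matroid.restrict_ground_eq]
        exact hLB
    have hrkL' : rkS (M.restrict B) L = 2 := by rw [rkS_restrict M hLB]; exact hrkL
    obtain ⟨F, hFflat, hFrk, hFskew, hFR⟩ := hline L hLflat hrkL'
    have hFskew' : rkS M (F ∪ L) = rkS M F + rkS M L := hFskew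
    have hFE := hFflat.subset_ground
    have hFB : F ⊆ B := by
      intro z hz
      have hzE : z ∈ R ∪ B := hRB.symm ▸ hFE hz
      rcases hzE with hzR | hzB
      · exact (Set.eq_empty_iff_forall_notMem.1 hFR z ⟨hz, hzR⟩).elim
      · exact hzB
    have hskew : rkS M (F ∪ L) = k + 1 := by rw [hFskew', hFrk, hrkL]; omega
    have hrkFuv : rkS M (F ∪ {u, v}) = k + 1 := by
      refine le_antisymm ?_ ?_
      · have h1 : rkS M (F ∪ {u, v}) ≤ rkS M (F ∪ L) :=
          rkS_mono (union_subset_union_right F hpairL)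
        omega
      · rw [← hskew]
        refine rkS_le_of_subset_closure (union_subset ?_ ?_)
        · exact fun z hz => M.subset_closure _ (union_subset hFE hpairE) (Or.inl hz)
        · exact hLcl.trans (M.closure_subset_closure subset_union_right)
    have hsing : ∀ w : α, w ∈ M.E → rkS M {w} ≤ 1 := by
      intro w hwE
      rw [rkS_indep (hs {w} (singleton_subset_iff.2 hwE) (by simp))]
      simp
    have huF : u ∉ F := by
      intro huF
      have hsub : F ∪ {u, v} ⊆ F ∪ {v} := by
        rintro z (hz | hz)
        · exact Or.inl hz
        · rcases hz with rfl | hz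
          · exact Or.inl huF
          · exact Or.inr hz
      have h1 : rkS M (F ∪ {u, v}) ≤ rkS M F + rkS M {v} :=
        (rkS_mono hsub).trans (rkS_union_le M F {v})
      have h2 := hsing v hvE
      rw [hrkFuv, hFrk] at h1
      omega
    have hvF : v ∉ F := by
      intro hvF
      have hsub : F ∪ {u, v} ⊆ F ∪ {u} := by
        rintro z (hz | hz)
        · exact Or.inl hz
        · rcases hz with rfl | hz
          · exact Or.inr rfl
          · exact Or.inl (hz ▸ hvF)
      have h1 : rkS M (F ∪ {u, v}) ≤ rkS M F + rkS M {u} :=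
        (rkS_mono hsub).trans (rkS_union_le M F {u})
      have h2 := hsing u huE
      rw [hrkFuv, hFrk] at h1
      omega
    exact ⟨F, hFflat, hFR, hFB, hFrk, hrkFuv, huF, hvF⟩
  -- hyperplane construction
  have mkHyp : ∀ X : Set α, rkS M X = k → Hyp M (M.closure X) := by
    intro X hX
    refine ⟨closure_flat' M X, ?_⟩
    rw [rkS_closure_eq M X, hX]
    have : rk M = k + 1 := hr
    omega
  have hins : ∀ F : Set α, M.IsFlat F → rkS M F = k - 1 →
      ∀ e ∈ M.E, e ∉ F → rkS M (insert e F) = k := by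
    intro F hF hFrk e heE heF
    rw [rkS_insert_eq heE hF.subset_ground (by rwa [hF.closure]), hFrk]
    omega
  rcases Set.eq_empty_or_nonempty R with hRemp | ⟨a, haR⟩
  · -- R empty : any hyperplane gives a contradiction
    obtain ⟨F, hFflat, hFR, hFB, hFrk, hFuv, hxF, hyF⟩ := getF x hxB y hyB hxy
    have hH := hhyp _ (mkHyp (insert x F) (hins F hFflat hFrk x (hBE hxB) hxF))
    rw [hRemp, Set.inter_empty] at hH
    exact Set.not_nonempty_empty hH
  have haE := hRE haR
  by_cases hbex : ∃ b ∈ R, b ≠ a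
  case neg =>
    -- R = {a}
    push_neg at hbex
    obtain ⟨F, hFflat, hFR, hFB, hFrk, hFuv, hxF, hyF⟩ := getF x hxB y hyB hxy
    have haF : a ∉ F := fun h => Set.eq_empty_iff_forall_notMem.1 hFR a ⟨h, haR⟩
    have hcov : M.E ⊆ M.closure (insert a F) := by
      intro e heE
      by_cases heF : e ∈ F
      · exact M.subset_closure _ (insert_subset haE hFflat.subset_ground) (Or.inr heF)
      · obtain ⟨c, hcH, hcR⟩ := hhyp _ (mkHyp (insert e F) (hins F hFflat hFrk e heE heF))
        have hca : c = a := hbex c hcR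
        subst hca
        have hccl : c ∈ M.closure (insert e F) \ M.closure F :=
          ⟨hcH, by rw [hFflat.closure]; exact haF⟩
        exact (Matroid.closure_exchange hccl).1
    have hle : rkS M M.E ≤ rkS M (insert a F) := rkS_le_of_subset_closure hcov
    have h1 : rkS M (insert a F) ≤ rkS M {a} + rkS M F := by
      rw [Set.insert_eq]
      exact rkS_union_le M {a} F
    have h2 : rkS M {a} ≤ 1 := by
      rw [rkS_indep (hs {a} (singleton_subset_iff.2 haE) (by simp))]
      simp
    rw [hrk, hFrk] at *
    omega
  case pos =>
    obtain ⟨b, hbR, hba⟩ := hbex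
    have hbE := hRE hbR
    have hRab : ∀ c ∈ R, c = a ∨ c = b := by
      intro c hcR
      by_contra hcc
      push_neg at hcc
      have hsubR : ({a, b, c} : Set α) ⊆ R := by
        rintro z (rfl | rfl | rfl)
        · exact haR
        · exact hbR
        · exact hcR
      have h3 : ({a, b, c} : Set α).ncard = 3 := by
        rw [Set.ncard_insert_of_notMem (by
          rintro (rfl | rfl)
          · exact hba rfl
          · exact hcc.1 rfl) (Set.toFinite _), Set.ncard_pair (fun h => hcc.2 h.symm)]
      have := Set.ncard_le_ncard hsubR (M.set_finite R hRE)
      omega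
    have hanB : a ∉ B := Set.disjoint_left.1 hd haR
    have hbnB : b ∉ B := Set.disjoint_left.1 hd hbR
    -- the splitting lemma for pairs in B
    have hsplit : ∀ u ∈ B, ∀ v ∈ B, u ≠ v →
        ((∃ C, Ckt M C ∧ a ∈ C ∧ u ∈ C) ∧ (∃ C, Ckt M C ∧ b ∈ C ∧ v ∈ C)) ∨
        ((∃ C, Ckt M C ∧ a ∈ C ∧ v ∈ C) ∧ (∃ C, Ckt M C ∧ b ∈ C ∧ u ∈ C)) := by
      intro u hu v hv huv
      obtain ⟨F, hFflat, hFR, hFB, hFrk, hFuv, huF, hvF⟩ := getF u hu v hv huv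
      have haF : a ∉ F := fun h => Set.eq_empty_iff_forall_notMem.1 hFR a ⟨h, haR⟩
      have hbF : b ∉ F := fun h => Set.eq_empty_iff_forall_notMem.1 hFR b ⟨h, hbR⟩
      have hFE := hFflat.subset_ground
      have hcov : ∀ e, e ∈ M.E → e ∉ F →
          e ∈ M.closure (insert a F) ∨ e ∈ M.closure (insert b F) := by
        intro e heE heF
        obtain ⟨c, hcH, hcR⟩ := hhyp _ (mkHyp (insert e F) (hins F hFflat hFrk e heE heF))
        have hcF : c ∉ M.closure F := by
          rw [hFflat.closure]
          rcases hRab c hcR with rfl | rfl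
          exacts [haF, hbF]
        have hecl := (Matroid.closure_exchange ⟨hcH, hcF⟩).1
        rcases hRab c hcR with rfl | rfl
        · exact Or.inl hecl
        · exact Or.inr hecl
      have hnot : ∀ c, c ∈ M.E → c ∉ F →
          ¬(u ∈ M.closure (insert c F) ∧ v ∈ M.closure (insert c F)) := by
        rintro c hcE hcF ⟨hu', hv'⟩
        have hsub : F ∪ {u, v} ⊆ M.closure (insert c F) := by
          refine union_subset ?_ ?_
          · exact fun z hz => M.subset_closure _ (insert_subset hcE hFE) (Or.inr hz)
          · rintro z (rfl | hz)
            · exact hu'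
            · exact hz ▸ hv'
        have h1 : rkS M (F ∪ {u, v}) ≤ rkS M (insert c F) := rkS_le_of_subset_closure hsub
        have h2 : rkS M (insert c F) = k := hins F hFflat hFrk c hcE hcF
        rw [hFuv, h2] at h1
        omega
      have hconn : ∀ c, c ∈ M.E → c ∉ F → c ∉ B → ∀ w ∈ B, w ∉ F →
          w ∈ M.closure (insert c F) → ∃ C, Ckt M C ∧ c ∈ C ∧ w ∈ C := by
        intro c hcE hcF hcB w hwB hwF hwcl
        have hccl : c ∈ M.closure (insert w F) :=
          (Matroid.closure_exchange ⟨hwcl, by rw [hFflat.closure]; exact hwF⟩).1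
        exact exists_ckt_pair hFflat hcF hwF (fun h => hcB (h ▸ hwB)) (hBE hwB) hccl
      rcases hcov u (hBE hu) huF with hua | hub <;>
        rcases hcov v (hBE hv) hvF with hva | hvb
      · exact absurd ⟨hua, hva⟩ (hnot a haE haF)
      · exact Or.inl ⟨hconn a haE haF hanB u hu huF hua, hconn b hbE hbF hbnB v hv hvF hvb⟩
      · exact Or.inr ⟨hconn a haE haF hanB v hv hvF hva, hconn b hbE hbF hbnB u hu huF hub⟩
      · exact absurd ⟨hub, hvb⟩ (hnot b hbE hbF)
    -- a third element of B
    obtain ⟨F₀, h0flat, h0R, h0B, h0rk, h0uv, hxF0, hyF0⟩ := getF x hxB y hyB hxy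
    have h0ne : F₀.Nonempty := by
      rw [Set.nonempty_iff_ne_empty]
      intro h
      rw [h] at h0rk
      have hz : rkS M (∅ : Set α) = 0 := by
        rw [rkS_indep M.empty_indep, Set.ncard_empty]
      omega
    obtain ⟨f, hf0⟩ := h0ne
    have hfB : f ∈ B := h0B hf0
    have hfx : f ≠ x := fun h => hxF0 (h ▸ hf0)
    have hfy : f ≠ y := fun h => hyF0 (h ▸ hf0)
    -- pivot element
    have S1 := hsplit x hxB y hyB hxy
    have S2 := hsplit x hxB f hfB (fun h => hfx h.symm)
    have S3 := hsplit y hyB f hfB (fun h => hfy h.symm)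
    have hpivot : ∃ p, (∃ C, Ckt M C ∧ a ∈ C ∧ p ∈ C) ∧ (∃ C, Ckt M C ∧ b ∈ C ∧ p ∈ C) := by
      rcases S1 with ⟨hax1, hby1⟩ | ⟨hay1, hbx1⟩
      · rcases S2 with ⟨hax2, hbf2⟩ | ⟨haf2, hbx2⟩
        · rcases S3 with ⟨hay3, hbf3⟩ | ⟨haf3, hby3⟩
          · exact ⟨y, hay3, hby1⟩
          · exact ⟨f, haf3, hbf2⟩
        · exact ⟨x, hax1, hbx2⟩
      · rcases S2 with ⟨hax2, hbf2⟩ | ⟨haf2, hbx2⟩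
        · exact ⟨x, hax2, hbx1⟩
        · rcases S3 with ⟨hay3, hbf3⟩ | ⟨haf3, hby3⟩
          · exact ⟨f, haf2, hbf3⟩
          · exact ⟨y, hay1, hby3⟩
    obtain ⟨p, ⟨C₁, hC₁, haC₁, hpC₁⟩, ⟨C₂, hC₂, hbC₂, hpC₂⟩⟩ := hpivot
    obtain ⟨C, hC, haC, hbC⟩ :=
      ckt_trans (C₁ ∪ C₂).ncard C₁ C₂ le_rfl hC₁ hC₂ haC₁ hbC₂ ⟨p, hpC₁, hpC₂⟩
    -- build a hyperplane avoiding both a and b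
    obtain ⟨W, hW, hCW⟩ := (hC.2.2 b hbC).subset_isBasis_of_subset (diff_subset.trans hC.1)
    have haW : a ∈ W := hCW ⟨haC, by simp only [mem_singleton_iff]; exact fun h => hba h.symm⟩
    have hbW : b ∉ W := by
      intro hbW
      refine hC.not_subset_indep hW.indep ?_
      intro z hz
      rcases eq_or_ne z b with rfl | hzb
      · exact hbW
      · exact hCW ⟨hz, hzb⟩
    have hanH : a ∉ M.closure (W \ {a}) := hW.indep.notMem_closure_diff_of_mem haW
    have hbnH : b ∉ M.closure (W \ {a}) := by
      intro hbH
      apply hanH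
      have hsub : C \ {a} ⊆ insert b (W \ {a}) := by
        rintro z ⟨hz, hza⟩
        rcases eq_or_ne z b with rfl | hzb
        · exact mem_insert _ _
        · exact Or.inr ⟨hCW ⟨hz, hzb⟩, hza⟩
      have h1 := M.closure_subset_closure hsub (hC.mem_closure_diff haC)
      rwa [Matroid.closure_insert_eq_of_mem_closure hbH] at h1
    have hWfin : W.Finite := M.set_finite W hW.indep.subset_ground
    have hHrk : rkS M (W \ {a}) = k := by
      have h1 : rkS M (W \ {a}) = (W \ {a}).ncard :=
        rkS_indep (hW.indep.subset diff_subset)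
      have h2 : rkS M M.E = W.ncard := rkS_eq_of_basis' hW.isBasis'
      have h3 : (W \ {a}).ncard + 1 = W.ncard := Set.ncard_diff_singleton_add_one haW hWfin
      omega
    obtain ⟨c, hcH, hcR⟩ := hhyp _ (mkHyp (W \ {a}) hHrk)
    rcases hRab c hcR with rfl | rfl
    · exact hanH hcH
    · exact hbnH hcH


end MatroidPaper
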